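/- For every non-empty finite poset P, the flip graph 𝓕³(P) on the antichains of P, in which two antichains are adjacent when their symmetric difference has size at most 3, contains a Hamiltonian path from some antichain of size 1 to the empty antichain. -/

import Mathlib

open Finset

section Helpers
variable {α : Type*} [DecidableEq α]

lemma card_symmDiff_le' (A B : Finset α) : (symmDiff A B).card ≤ A.card + B.card :=
  le_trans (Finset.card_le_card symmDiff_le_sup) (Finset.card_union_le _ _)

lemma symmDiff_insert_insert {c : α} {A B : Finset α} (hA : c ∉ A) (hB : c ∉ B) :
    symmDiff (insert c A) (insert c B) = symmDiff A B := by
  ext x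
  by_cases hx : x = c
  · subst hx; simp [Finset.mem_symmDiff, hA, hB]
  · simp [Finset.mem_symmDiff, hx]

lemma mapSymmDiffEq {β : Type*} [DecidableEq β] (e : α ↪ β) (A B : Finset α) :
    symmDiff (A.map e) (B.map e) = (symmDiff A B).map e := by
  ext x
  simp only [Finset.mem_symmDiff, Finset.mem_map]
  constructor
  · rintro (⟨⟨a, ha, rfl⟩, h2⟩ | ⟨⟨a, ha, rfl⟩, h2⟩)
    · exact ⟨a, Or.inl ⟨ha, fun hb => h2 ⟨a, hb, rfl⟩⟩, rfl⟩
    · exact ⟨a, Or.inr ⟨ha, fun hb => h2 ⟨a, hb, rfl⟩⟩, rfl⟩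
  · rintro ⟨a, (⟨ha, hb⟩ | ⟨ha, hb⟩), rfl⟩
    · exact Or.inl ⟨⟨a, ha, rfl⟩, by rintro ⟨a', ha', he⟩; exact hb (e.injective he ▸ ha')⟩
    · exact Or.inr ⟨⟨a, ha, rfl⟩, by rintro ⟨a', ha', he⟩; exact hb (e.injective he ▸ ha')⟩

omit [DecidableEq α] in
lemma isAntichain_map_iff [PartialOrder α] {p : α → Prop} (B : Finset {x // p x}) :
    IsAntichain (· ≤ ·) ((B.map (Function.Embedding.subtype p) : Finset α) : Set α) ↔
      IsAntichain (· ≤ ·) (B : Set {x // p x}) := by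
  constructor
  · intro h a ha b hb hne hle
    refine h (x := (a : α)) ?_ (y := (b : α)) ?_ (fun he => hne (Subtype.coe_injective he)) hle
    · exact Finset.mem_coe.2 (by simp only [Finset.mem_map]; exact ⟨a, ha, rfl⟩)
    · exact Finset.mem_coe.2 (by simp only [Finset.mem_map]; exact ⟨b, hb, rfl⟩)
  · intro h x hx y hy hne hle
    simp only [Finset.mem_coe, Finset.mem_map, Function.Embedding.coe_subtype] at hx hy
    obtain ⟨a, ha, rfl⟩ := hx
    obtain ⟨b, hb, rfl⟩ := hy
    exact h ha hb (fun he => hne (congrArg _ he)) hle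
end Helpers

universe u

lemma ham_main : ∀ (n : ℕ) (α : Type u) [Fintype α] [PartialOrder α] [DecidableEq α],
    Fintype.card α ≤ n →
    ∃ L : List (Finset α), L.Nodup ∧
      (∀ A : Finset α, A ∈ L ↔ IsAntichain (· ≤ ·) (A : Set α)) ∧
      List.Chain' (fun A B => (symmDiff A B).card ≤ 3) L ∧
      L.getLast? = some ∅ ∧
      (∀ _ : Nonempty α, ∃ a : α, L.head? = some {a}) := by
  intro n
  induction n with
  | zero =>
    intro α _ _ _ hcard
    have hE : IsEmpty α := Fintype.card_eq_zero_iff.mp (Nat.le_zero.mp hcard)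
    refine ⟨[∅], by simp, fun A => ?_, List.isChain_singleton _, by simp, fun h => absurd h (not_nonempty_iff.2 hE)⟩
    have hA : A = ∅ := Finset.eq_empty_of_isEmpty A
    subst hA
    simp [IsAntichain, Set.Pairwise]
  | succ n ih =>
    intro α _ _ _ hcard
    classical
    by_cases hα : Nonempty α
    case neg =>
      have hE : IsEmpty α := not_nonempty_iff.mp hα
      refine ⟨[∅], by simp, fun A => ?_, List.isChain_singleton _, by simp, fun h => absurd h hα⟩
      have hA : A = ∅ := Finset.eq_empty_of_isEmpty A
      subst hA
      simp [IsAntichain, Set.Pairwise]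
    case pos =>
    obtain ⟨c⟩ := hα
    set p₁ : α → Prop := fun x => ¬ x ≤ c ∧ ¬ c ≤ x with hp₁
    set p₂ : α → Prop := fun x => x ≠ c with hp₂
    have hcard₁ : Fintype.card {x // p₁ x} ≤ n := by
      have := Fintype.card_subtype_lt (p := p₁) (x := c) (by simp [hp₁])
      omega
    have hcard₂ : Fintype.card {x // p₂ x} ≤ n := by
      have := Fintype.card_subtype_lt (p := p₂) (x := c) (by simp [hp₂])
      omega
    obtain ⟨L₁, hnd₁, hmem₁, hch₁, hlast₁, hhead₁⟩ := ih {x // p₁ x} hcard₁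
    obtain ⟨L₂, hnd₂, hmem₂, hch₂, hlast₂, hhead₂⟩ := ih {x // p₂ x} hcard₂
    set e₁ : {x // p₁ x} ↪ α := Function.Embedding.subtype p₁ with he₁
    set e₂ : {x // p₂ x} ↪ α := Function.Embedding.subtype p₂ with he₂
    set g₁ : Finset {x // p₁ x} → Finset α := fun B => insert c (B.map e₁) with hg₁
    set g₂ : Finset {x // p₂ x} → Finset α := fun B => B.map e₂ with hg₂
    have hce₁ : ∀ B : Finset {x // p₁ x}, c ∉ B.map e₁ := by
      intro B hc
      simp only [Finset.mem_map, he₁, Function.Embedding.coe_subtype] at hc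
      obtain ⟨b, _, hb⟩ := hc
      exact (hb ▸ b.2).2 le_rfl
    have hce₂ : ∀ B : Finset {x // p₂ x}, c ∉ B.map e₂ := by
      intro B hc
      simp only [Finset.mem_map, he₂, Function.Embedding.coe_subtype] at hc
      obtain ⟨b, _, hb⟩ := hc
      exact b.2 hb
    have hcg₁ : ∀ B, c ∈ g₁ B := fun B => Finset.mem_insert_self _ _
    have hginj₁ : Function.Injective g₁ := by
      intro B B' h
      have h2 : B.map e₁ = B'.map e₁ := by
        have := congrArg (fun s => Finset.erase s c) h
        simpa [hg₁, Finset.erase_insert (hce₁ B), Finset.erase_insert (hce₁ B')] using this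
      exact Finset.map_injective e₁ h2
    have hginj₂ : Function.Injective g₂ := fun B B' h => Finset.map_injective e₂ h
    obtain ⟨H₁, t₁, rfl⟩ := List.exists_cons_of_ne_nil
      (fun h => by rw [h] at hlast₁; simp at hlast₁ : L₁ ≠ [])
    obtain ⟨H₂, t₂, rfl⟩ := List.exists_cons_of_ne_nil
      (fun h => by rw [h] at hlast₂; simp at hlast₂ : L₂ ≠ [])
    set L₁ : List (Finset {x // p₁ x}) := H₁ :: t₁ with hL₁
    set L₂ : List (Finset {x // p₂ x}) := H₂ :: t₂ with hL₂
    set part1 : List (Finset α) := L₁.reverse.map g₁ with hpart1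
    set part2 : List (Finset α) := L₂.map g₂ with hpart2
    refine ⟨part1 ++ part2, ?_, ?_, ?_, ?_, ?_⟩
    · -- Nodup
      refine List.Nodup.append ?_ ((hnd₂).map hginj₂) ?_
      · exact (List.nodup_reverse.mpr hnd₁).map hginj₁
      · intro x hx hx'
        simp only [hpart1, List.mem_map] at hx
        simp only [hpart2, List.mem_map] at hx'
        obtain ⟨B, _, rfl⟩ := hx
        obtain ⟨B', _, hB'⟩ := hx'
        exact hce₂ B' (by rw [show (B'.map e₂ : Finset α) = g₂ B' from rfl, hB']; exact hcg₁ B)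
    · -- membership
      intro A
      simp only [List.mem_append, hpart1, hpart2, List.mem_map, List.mem_reverse]
      constructor
      · rintro (⟨B, hB, rfl⟩ | ⟨B, hB, rfl⟩)
        · have hBa := (hmem₁ B).mp hB
          have hXa : IsAntichain (· ≤ ·) ((B.map e₁ : Finset α) : Set α) :=
            (isAntichain_map_iff B).mpr hBa
          have : (g₁ B : Set α) = insert c ((B.map e₁ : Finset α) : Set α) := by
            simp [hg₁]
          rw [this]
          refine hXa.insert ?_ ?_
          · intro b hb hne hle
            simp only [Finset.mem_coe, Finset.mem_map, he₁,
              Function.Embedding.coe_subtype] at hb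
            obtain ⟨b', _, rfl⟩ := hb
            exact b'.2.1 hle
          · intro b hb hne hle
            simp only [Finset.mem_coe, Finset.mem_map, he₁,
              Function.Embedding.coe_subtype] at hb
            obtain ⟨b', _, rfl⟩ := hb
            exact b'.2.2 hle
        · exact (isAntichain_map_iff B).mpr ((hmem₂ B).mp hB)
      · intro hA
        by_cases hc : c ∈ A
        · left
          set B : Finset {x // p₁ x} := (A.erase c).subtype p₁ with hB
          have hall : ∀ x ∈ A.erase c, p₁ x := by
            intro x hx
            have hxc : x ≠ c := Finset.ne_of_mem_erase hx
            have hxA : x ∈ A := Finset.mem_of_mem_erase hx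
            exact ⟨hA hxA hc hxc, hA hc hxA (Ne.symm hxc)⟩
          have hmapB : B.map e₁ = A.erase c := by
            rw [hB, he₁, Finset.subtype_map]
            exact Finset.filter_true_of_mem hall
          have hgB : g₁ B = A := by
            rw [hg₁]; simp only []
            rw [hmapB, Finset.insert_erase hc]
          refine ⟨B, ?_, hgB⟩
          rw [hmem₁]
          rw [← isAntichain_map_iff, ← he₁, hmapB]
          exact hA.subset (by simp [Finset.erase_subset])
        · right
          set B : Finset {x // p₂ x} := A.subtype p₂ with hB
          have hmapB : B.map e₂ = A := by
            rw [hB, he₂, Finset.subtype_map]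
            exact Finset.filter_true_of_mem (fun x hx => fun hxc => hc (hxc ▸ hx))
          refine ⟨B, ?_, hmapB⟩
          rw [hmem₂]
          rw [← isAntichain_map_iff, ← he₂, hmapB]
          exact hA
    · -- chain
      have hrev : List.Chain' (fun A B : Finset {x // p₁ x} => (symmDiff A B).card ≤ 3)
          L₁.reverse := by
        show List.IsChain _ _; rw [List.isChain_reverse]
        refine hch₁.imp ?_
        intro a b h
        show (symmDiff b a).card ≤ 3
        rwa [symmDiff_comm]
      have hch1 : List.Chain' (fun A B => (symmDiff A B).card ≤ 3) part1 := by
        refine List.isChain_map_of_isChain g₁ ?_ hrev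
        intro A B h
        show (symmDiff (g₁ A) (g₁ B)).card ≤ 3
        rw [hg₁]; simp only []
        rw [symmDiff_insert_insert (hce₁ A) (hce₁ B), mapSymmDiffEq, Finset.card_map]
        exact h
      have hch2 : List.Chain' (fun A B => (symmDiff A B).card ≤ 3) part2 := by
        refine List.isChain_map_of_isChain g₂ ?_ hch₂
        intro A B h
        show (symmDiff (g₂ A) (g₂ B)).card ≤ 3
        rw [hg₂]; simp only []
        rw [mapSymmDiffEq, Finset.card_map]
        exact h
      refine hch1.append hch2 ?_
      intro x hx y hy
      have hx' : x = g₁ H₁ := by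
        rw [hpart1] at hx
        simp only [List.getLast?_map, List.getLast?_reverse] at hx
        simp [hL₁] at hx
        exact hx.symm
      have hy' : y = g₂ H₂ := by
        rw [hpart2] at hy
        simp only [List.head?_map] at hy
        simp [hL₂] at hy
        exact hy.symm
      have hH₁ : H₁.card ≤ 1 := by
        by_cases hne : Nonempty {x // p₁ x}
        · obtain ⟨a, ha⟩ := hhead₁ hne
          simp [hL₁] at ha
          rw [ha]; simp
        · have : IsEmpty {x // p₁ x} := not_nonempty_iff.mp hne
          rw [Finset.eq_empty_of_isEmpty H₁]; simp
      have hH₂ : H₂.card ≤ 1 := by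
        by_cases hne : Nonempty {x // p₂ x}
        · obtain ⟨a, ha⟩ := hhead₂ hne
          simp [hL₂] at ha
          rw [ha]; simp
        · have : IsEmpty {x // p₂ x} := not_nonempty_iff.mp hne
          rw [Finset.eq_empty_of_isEmpty H₂]; simp
      have hx2 : x.card ≤ 2 := by
        rw [hx', hg₁]; simp only []
        calc (insert c (H₁.map e₁)).card ≤ (H₁.map e₁).card + 1 := Finset.card_insert_le _ _
        _ ≤ 2 := by rw [Finset.card_map]; omega
      have hy1 : y.card ≤ 1 := by
        rw [hy', hg₂]; simp only []
        rw [Finset.card_map]; exact hH₂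
      calc (symmDiff x y).card ≤ x.card + y.card := card_symmDiff_le' x y
      _ ≤ 3 := by omega
    · -- getLast?
      rw [List.getLast?_append]
      have : part2.getLast? = some ∅ := by
        rw [hpart2, List.getLast?_map, hlast₂]
        simp [hg₂]
      rw [this]; rfl
    · -- head?
      intro _
      refine ⟨c, ?_⟩
      have hne : part1 ≠ [] := by simp [hpart1, hL₁]
      rw [List.head?_append_of_ne_nil _ hne]
      rw [hpart1, List.head?_map, List.head?_reverse, hlast₁]
      simp [hg₁]

theorem stmt_18 (α : Type*) [Fintype α] [PartialOrder α] [DecidableEq α] [Nonempty α] :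
    ∃ L : List (Finset α), L.Nodup ∧
      (∀ A : Finset α, A ∈ L ↔ IsAntichain (· ≤ ·) (A : Set α)) ∧
      List.Chain' (fun A B => (symmDiff A B).card ≤ 3) L ∧
      (∃ a : α, L.head? = some {a}) ∧ L.getLast? = some ∅ := by
  obtain ⟨L, h1, h2, h3, h4, h5⟩ := ham_main (Fintype.card α) α le_rfl
  exact ⟨L, h1, h2, h3, h5 ‹Nonempty α›, h4⟩
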